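/- arXiv:2310.10303 — 12 statements merged into one kernel-verified Lean document; each statement's English description precedes it below -/
import Mathlib

section
/- For real numbers x_1 ≤ x_2 ≤ ... ≤ x_n with x_1 < x_n, the absolute difference between the median and the mean is at most the (population) standard deviation s, i.e., |med x - x̄| ≤ s. -/
open Finset

theorem stmt_0 (n : ℕ) (hn : 2 ≤ n) (x : ℕ → ℝ)
    (hmono : ∀ i j, 1 ≤ i → i ≤ j → j ≤ n → x i ≤ x j)
    (hlt : x 1 < x n)
    (med : ℝ)
    (hmed : (∃ k : ℕ, n = 2 * k + 1 ∧ med = x (k + 1)) ∨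
            (∃ k : ℕ, n = 2 * k ∧ med = (x k + x (k + 1)) / 2)) :
    |med - (∑ i ∈ Icc 1 n, x i) / n| ≤
      Real.sqrt ((∑ i ∈ Icc 1 n, (x i - (∑ j ∈ Icc 1 n, x j) / n) ^ 2) / n) := by
  have hn0 : (0:ℝ) < n := by positivity
  set xb : ℝ := (∑ i ∈ Icc 1 n, x i) / n with hxb
  -- median lies between x (min i j) and x (max i j) for j = n+1-i
  have hbetween : ∀ i ∈ Icc 1 n, x (min i (n + 1 - i)) ≤ med ∧ med ≤ x (max i (n + 1 - i)) := by
    intro i hi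
    simp only [mem_Icc] at hi
    obtain ⟨hi1, hin⟩ := hi
    have hjsum : i + (n + 1 - i) = n + 1 := by omega
    rcases hmed with ⟨k, hk, hm⟩ | ⟨k, hk, hm⟩
    · have h1 : min i (n + 1 - i) ≤ k + 1 := by omega
      have h2 : k + 1 ≤ max i (n + 1 - i) := by omega
      constructor
      · rw [hm]; exact hmono _ _ (by omega) h1 (by omega)
      · rw [hm]; exact hmono _ _ (by omega) h2 (by omega)
    · have hk1 : 1 ≤ k := by omega
      have hkk : x k ≤ x (k+1) := hmono _ _ hk1 (by omega) (by omega)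
      constructor
      · have : x (min i (n + 1 - i)) ≤ x k := hmono _ _ (by omega) (by omega) (by omega)
        rw [hm]; linarith
      · have : x (k+1) ≤ x (max i (n + 1 - i)) := hmono _ _ (by omega) (by omega) (by omega)
        rw [hm]; linarith
  -- pair equality
  have hpair : ∀ i ∈ Icc 1 n, |x i - med| + |x (n + 1 - i) - med| = |x (n + 1 - i) - x i| := by
    intro i hi
    obtain ⟨hlo, hhi⟩ := hbetween i hi
    simp only [mem_Icc] at hi
    rcases le_total i (n + 1 - i) with h | h
    · rw [min_eq_left h] at hlo; rw [max_eq_right h] at hhi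
      have hx : x i ≤ x (n + 1 - i) := hmono _ _ (by omega) h (by omega)
      rw [abs_of_nonpos (by linarith), abs_of_nonneg (by linarith),
        abs_of_nonneg (by linarith)]
      ring
    · rw [min_eq_right h] at hlo; rw [max_eq_left h] at hhi
      have hx : x (n + 1 - i) ≤ x i := hmono _ _ (by omega) h (by omega)
      rw [abs_of_nonneg (by linarith), abs_of_nonpos (by linarith),
        abs_of_nonpos (by linarith)]
      ring
  -- reflection sum identity
  have hrefl : ∀ f : ℕ → ℝ, ∑ i ∈ Icc 1 n, f (n + 1 - i) = ∑ i ∈ Icc 1 n, f i := by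
    intro f
    apply Finset.sum_nbij' (fun i => n + 1 - i) (fun i => n + 1 - i)
    all_goals intro i hi <;> simp only [mem_Icc] at * <;> omega
  -- median minimizes sum of absolute deviations (vs xb)
  have hmin : ∑ i ∈ Icc 1 n, |x i - med| ≤ ∑ i ∈ Icc 1 n, |x i - xb| := by
    have h2m : 2 * ∑ i ∈ Icc 1 n, |x i - med| = ∑ i ∈ Icc 1 n, |x (n + 1 - i) - x i| := by
      rw [two_mul]
      nth_rewrite 2 [← hrefl (fun i => |x i - med|)]
      rw [← Finset.sum_add_distrib]
      exact Finset.sum_congr rfl hpair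
    have h2c : ∑ i ∈ Icc 1 n, |x (n + 1 - i) - x i| ≤ 2 * ∑ i ∈ Icc 1 n, |x i - xb| := by
      rw [two_mul]
      nth_rewrite 2 [← hrefl (fun i => |x i - xb|)]
      rw [← Finset.sum_add_distrib]
      apply Finset.sum_le_sum
      intro i _
      calc |x (n + 1 - i) - x i| = |(x (n+1-i) - xb) - (x i - xb)| := by ring_nf
        _ ≤ |x (n+1-i) - xb| + |x i - xb| := abs_sub _ _
        _ = |x i - xb| + |x (n + 1 - i) - xb| := by ring
    linarith
  -- main chain
  have hcard : (Icc 1 n).card = n := by rw [Nat.card_Icc]; omega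
  have h1 : (n:ℝ) * |med - xb| ≤ ∑ i ∈ Icc 1 n, |x i - xb| := by
    calc (n:ℝ) * |med - xb| = |(n:ℝ) * (med - xb)| := by
          rw [abs_mul, abs_of_pos hn0]
      _ = |∑ i ∈ Icc 1 n, (med - x i)| := by
          rw [Finset.sum_sub_distrib, Finset.sum_const, hcard, nsmul_eq_mul]
          congr 1
          rw [hxb, mul_sub, mul_div_assoc', mul_div_cancel_left₀ _ hn0.ne']
      _ ≤ ∑ i ∈ Icc 1 n, |med - x i| := Finset.abs_sum_le_sum_abs _ _
      _ = ∑ i ∈ Icc 1 n, |x i - med| := by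
          exact Finset.sum_congr rfl fun i _ => abs_sub_comm _ _
      _ ≤ ∑ i ∈ Icc 1 n, |x i - xb| := hmin
  have hCS : (∑ i ∈ Icc 1 n, |x i - xb|) ^ 2 ≤ (n:ℝ) * ∑ i ∈ Icc 1 n, (x i - xb) ^ 2 := by
    have := sq_sum_le_card_mul_sum_sq (s := Icc 1 n) (f := fun i => |x i - xb|)
    simp only [sq_abs, hcard] at this
    exact this
  rw [show |med - (∑ i ∈ Icc 1 n, x i) / n| = |med - xb| from rfl]
  rw [Real.le_sqrt (abs_nonneg _)]
  · rw [le_div_iff₀ hn0]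
    nlinarith [pow_le_pow_left₀ (mul_nonneg hn0.le (abs_nonneg (med - xb))) h1 2,
    sq_nonneg (med - xb), Finset.sum_nonneg fun i (_ : i ∈ Icc 1 n) => sq_nonneg (x i - xb)]
  · positivity
end

section
/- Let n = 2k+1 with k ≥ 1 and x_1 ≤ ... ≤ x_n reals with x_1 < x_n. Then |x_{k+1} - x̄| / s ≤ sqrt(k/(k+1)), where x̄ is the mean and s the population standard deviation. -/
open Finset

lemma cauchy_bound (k : ℕ) (hk : 1 ≤ k) (A B : Finset ℕ) (hAB : Disjoint A B)
    (hA : A.card = k + 1) (hB : B.card = k) (f : ℕ → ℝ) (d : ℝ) (hd0 : 0 ≤ d)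
    (hsum : ∑ i ∈ A ∪ B, f i = 0) (hfA : ∀ i ∈ A, f i ≤ -d) :
    ((k : ℝ) + 1) * (2 * k + 1) / k * d ^ 2 ≤ ∑ i ∈ A ∪ B, f i ^ 2 := by
  have hk0 : (0:ℝ) < k := by exact_mod_cast hk
  have hsplit : ∑ i ∈ A ∪ B, f i = ∑ i ∈ A, f i + ∑ i ∈ B, f i :=
    Finset.sum_union hAB
  have hsplit2 : ∑ i ∈ A ∪ B, f i ^ 2 = ∑ i ∈ A, f i ^ 2 + ∑ i ∈ B, f i ^ 2 :=
    Finset.sum_union hAB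
  have hSA : ((k:ℝ) + 1) * d ^ 2 ≤ ∑ i ∈ A, f i ^ 2 := by
    have : ∀ i ∈ A, d ^ 2 ≤ f i ^ 2 := fun i hi => by nlinarith [hfA i hi]
    calc ((k:ℝ)+1) * d ^ 2 = ∑ _i ∈ A, d ^ 2 := by
          rw [Finset.sum_const, hA]; push_cast; ring
      _ ≤ ∑ i ∈ A, f i ^ 2 := Finset.sum_le_sum this
  have hSAsum : ∑ i ∈ A, f i ≤ -(((k:ℝ)+1) * d) := by
    calc ∑ i ∈ A, f i ≤ ∑ _i ∈ A, (-d) := Finset.sum_le_sum hfA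
      _ = -(((k:ℝ)+1) * d) := by rw [Finset.sum_const, hA]; push_cast; ring
  have hSB : ((k:ℝ)+1) * d ≤ ∑ i ∈ B, f i := by linarith [hsplit ▸ hsum]
  have hcs : (∑ i ∈ B, f i) ^ 2 ≤ (k:ℝ) * ∑ i ∈ B, f i ^ 2 := by
    have := sq_sum_le_card_mul_sum_sq (s := B) (f := f)
    rwa [hB] at this
  have hSB2 : (((k:ℝ)+1) * d) ^ 2 ≤ (k:ℝ) * ∑ i ∈ B, f i ^ 2 := by
    have h1 : (((k:ℝ)+1) * d) ^ 2 ≤ (∑ i ∈ B, f i) ^ 2 := by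
      apply pow_le_pow_left₀ (by positivity) hSB
    linarith
  rw [hsplit2, div_mul_eq_mul_div, div_le_iff₀ hk0]
  nlinarith [hSA, hSB2]

theorem stmt_5 (k n : ℕ) (hk : 1 ≤ k) (hn : n = 2 * k + 1) (x : ℕ → ℝ)
    (hmono : ∀ i j, 1 ≤ i → i ≤ j → j ≤ n → x i ≤ x j)
    (hlt : x 1 < x n) :
    |x (k + 1) - (∑ i ∈ Icc 1 n, x i) / n| /
      Real.sqrt ((∑ i ∈ Icc 1 n, (x i - (∑ j ∈ Icc 1 n, x j) / n) ^ 2) / n) ≤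
      Real.sqrt ((k : ℝ) / (k + 1)) := by
  have hk0 : (0:ℝ) < k := by exact_mod_cast hk
  have hn0 : (0:ℝ) < n := by rw [hn]; positivity
  set μ := (∑ i ∈ Icc 1 n, x i) / n with hμ
  set m := x (k+1) with hm
  have hcard : (Icc 1 n).card = n := by simp
  have hsum0 : ∑ i ∈ Icc 1 n, (x i - μ) = 0 := by
    rw [Finset.sum_sub_distrib, Finset.sum_const, hcard, hμ, nsmul_eq_mul]
    field_simp
    ring
  have hkey : ((k:ℝ)+1)*(2*k+1)/k * (m - μ)^2 ≤ ∑ i ∈ Icc 1 n, (x i - μ)^2 := by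
    rcases le_total μ m with hcase | hcase
    · have hAB : Disjoint (Icc (k+1) n) (Icc 1 k) := by
        rw [Finset.disjoint_left]; intro a ha hb
        simp only [mem_Icc] at ha hb; omega
      have hU : Icc (k+1) n ∪ Icc 1 k = Icc 1 n := by
        ext i; simp only [mem_union, mem_Icc]; omega
      have hA : (Icc (k+1) n).card = k + 1 := by rw [Nat.card_Icc]; omega
      have hB : (Icc 1 k).card = k := by rw [Nat.card_Icc]; omega
      have hneg : ∀ i : ℕ, μ - x i = -(x i - μ) := fun i => by ring
      have hbound := cauchy_bound k hk _ _ hAB hA hB (fun i => μ - x i) (m - μ)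
        (by linarith)
        (by rw [hU]; simp only [hneg, Finset.sum_neg_distrib, hsum0, neg_zero])
        (by intro i hi; simp only [mem_Icc] at hi
            have := hmono (k+1) i (by omega) hi.1 hi.2
            linarith)
      rw [hU] at hbound
      calc ((k:ℝ)+1)*(2*k+1)/k * (m - μ)^2 ≤ ∑ i ∈ Icc 1 n, (μ - x i)^2 := hbound
        _ = ∑ i ∈ Icc 1 n, (x i - μ)^2 := by
            apply Finset.sum_congr rfl; intro i _; ring
    · have hAB : Disjoint (Icc 1 (k+1)) (Icc (k+2) n) := by
        rw [Finset.disjoint_left]; intro a ha hb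
        simp only [mem_Icc] at ha hb; omega
      have hU : Icc 1 (k+1) ∪ Icc (k+2) n = Icc 1 n := by
        ext i; simp only [mem_union, mem_Icc]; omega
      have hA : (Icc 1 (k+1)).card = k + 1 := by rw [Nat.card_Icc]; omega
      have hB : (Icc (k+2) n).card = k := by rw [Nat.card_Icc]; omega
      have hbound := cauchy_bound k hk _ _ hAB hA hB (fun i => x i - μ) (μ - m)
        (by linarith)
        (by rw [hU]; exact hsum0)
        (by intro i hi; simp only [mem_Icc] at hi
            have := hmono i (k+1) hi.1 hi.2 (by omega)
            linarith)
      rw [hU] at hbound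
      calc ((k:ℝ)+1)*(2*k+1)/k * (m - μ)^2
          = ((k:ℝ)+1)*(2*k+1)/k * (μ - m)^2 := by ring
        _ ≤ ∑ i ∈ Icc 1 n, (x i - μ)^2 := hbound
  have hSpos : 0 < ∑ i ∈ Icc 1 n, (x i - μ)^2 := by
    have hsub : ({1, n} : Finset ℕ) ⊆ Icc 1 n := by
      intro i hi; simp only [mem_insert, mem_singleton] at hi
      rcases hi with h | h <;> simp [h, mem_Icc] <;> omega
    have hne : (1:ℕ) ≠ n := by omega
    have hpair : ∑ i ∈ ({1, n} : Finset ℕ), (x i - μ)^2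
        = (x 1 - μ)^2 + (x n - μ)^2 := Finset.sum_pair hne
    have hle : ∑ i ∈ ({1, n} : Finset ℕ), (x i - μ)^2 ≤ ∑ i ∈ Icc 1 n, (x i - μ)^2 :=
      Finset.sum_le_sum_of_subset_of_nonneg hsub (fun i _ _ => sq_nonneg _)
    have hpos : 0 < (x 1 - μ)^2 + (x n - μ)^2 := by
      nlinarith [sq_nonneg (x 1 + x n - 2*μ), sq_nonneg (x 1 - x n)]
    linarith [hpair ▸ hle]
  set v := (∑ i ∈ Icc 1 n, (x i - μ)^2) / n with hv
  have hv0 : 0 < v := div_pos hSpos hn0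
  have hSnv : ∑ i ∈ Icc 1 n, (x i - μ)^2 = n * v := by
    rw [hv]; field_simp
  have hnr : (n:ℝ) = 2*k+1 := by rw [hn]; push_cast; ring
  have hineq : (m - μ)^2 ≤ v * ((k:ℝ)/(k+1)) := by
    rw [div_mul_eq_mul_div, div_le_iff₀ hk0] at hkey
    rw [mul_div_assoc', le_div_iff₀ (by positivity : (0:ℝ) < (k:ℝ)+1)]
    rw [hSnv, hnr] at hkey
    nlinarith [hkey, mul_pos (mul_pos (show (0:ℝ) < 2*(k:ℝ)+1 by positivity) hv0) hk0]
  have habs : |m - μ| = Real.sqrt ((m - μ)^2) := (Real.sqrt_sq_eq_abs _).symm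
  rw [habs, ← Real.sqrt_div (sq_nonneg _)]
  apply Real.sqrt_le_sqrt
  rw [div_le_iff₀ hv0]
  linarith [hineq]
end

section
/- Let n = 2k with k ≥ 2 and x_1 ≤ ... ≤ x_n reals with x_1 < x_n. Then |(x_k + x_{k+1})/2 - x̄| / s ≤ sqrt((k-1)/(k+1)), where x̄ is the mean and s the population standard deviation. -/
open Finset

private lemma split_sum (k : ℕ) (hk : 2 ≤ k) (f : ℕ → ℝ) :
    ∑ i ∈ Icc 1 (2*k), f i
      = (∑ i ∈ Icc 1 (k-1), f i) + f k + f (k+1) + ∑ i ∈ Icc (k+2) (2*k), f i := by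
  have h1 : ∑ i ∈ Ioc 0 (k+1), f i + ∑ i ∈ Ioc (k+1) (2*k), f i = ∑ i ∈ Ioc 0 (2*k), f i :=
    Finset.sum_Ioc_consecutive f (by omega) (by omega)
  simp only [← Finset.Icc_add_one_left_eq_Ioc, Nat.succ_eq_add_one, Nat.zero_add] at h1
  have h2 : ∑ i ∈ Icc 1 (k+1), f i = ∑ i ∈ Icc 1 k, f i + f (k+1) :=
    Finset.sum_Icc_succ_top (by omega) f
  have h3 : ∑ i ∈ Icc 1 k, f i = ∑ i ∈ Icc 1 (k-1), f i + f k := by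
    have hkk : k - 1 + 1 = k := by omega
    rw [← hkk]
    exact Finset.sum_Icc_succ_top (by omega) f
  rw [← h1, h2, h3]; rfl

private lemma sum_sub_sq (s : Finset ℕ) (f : ℕ → ℝ) (c : ℝ) :
    ∑ i ∈ s, (f i - c)^2 = (∑ i ∈ s, f i^2) - 2*c*(∑ i ∈ s, f i) + s.card * c^2 := by
  simp only [sub_sq]
  rw [Finset.sum_add_distrib, Finset.sum_sub_distrib, Finset.sum_const, nsmul_eq_mul]
  have : ∑ i ∈ s, 2 * f i * c = 2*c*∑ i ∈ s, f i := by
    rw [Finset.mul_sum]; exact Finset.sum_congr rfl (fun i _ => by ring)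
  rw [this]

set_option maxHeartbeats 2000000 in
theorem stmt_6 (k n : ℕ) (hk : 2 ≤ k) (hn : n = 2 * k) (x : ℕ → ℝ)
    (hmono : ∀ i j, 1 ≤ i → i ≤ j → j ≤ n → x i ≤ x j)
    (hlt : x 1 < x n) :
    |(x k + x (k + 1)) / 2 - (∑ i ∈ Icc 1 n, x i) / n| /
      Real.sqrt ((∑ i ∈ Icc 1 n, (x i - (∑ j ∈ Icc 1 n, x j) / n) ^ 2) / n) ≤
      Real.sqrt (((k : ℝ) - 1) / (k + 1)) := by
  subst hn
  push_cast
  set K : ℝ := (k : ℝ) with hKdef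
  have hK : (2:ℝ) ≤ K := by rw [hKdef]; exact_mod_cast hk
  set m : ℝ := (x k + x (k+1))/2 with hm
  set μ : ℝ := (∑ i ∈ Icc 1 (2*k), x i) / (2*K) with hμdef
  set T : ℝ := ∑ i ∈ Icc 1 (2*k), (x i - m) with hT
  set Q : ℝ := ∑ i ∈ Icc 1 (2*k), (x i - m)^2 with hQ
  have h21 : 2*k+1-1 = 2*k := by omega
  have hcard : ((Icc 1 (2*k)).card : ℝ) = 2*K := by
    rw [Nat.card_Icc, h21, hKdef]; push_cast; ring
  -- mean in terms of T
  have hSm : ∑ i ∈ Icc 1 (2*k), x i = T + (2*K) * m := by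
    rw [hT, Finset.sum_sub_distrib, Finset.sum_const, nsmul_eq_mul, hcard]; ring
  have hμ : μ = T/(2*K) + m := by
    rw [hμdef, hSm]; field_simp
  -- variance identity
  have hvar : (∑ i ∈ Icc 1 (2*k), (x i - μ)^2) = Q - T^2/(2*K) := by
    have h1 : ∀ i, x i - μ = (x i - m) - T/(2*K) := by intro i; rw [hμ]; ring
    calc ∑ i ∈ Icc 1 (2*k), (x i - μ)^2
        = ∑ i ∈ Icc 1 (2*k), ((x i - m) - T/(2*K))^2 :=
          Finset.sum_congr rfl (fun i _ => by rw [h1 i])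
      _ = Q - 2*(T/(2*K))*T + ((Icc 1 (2*k)).card) * (T/(2*K))^2 :=
          sum_sub_sq _ _ _
      _ = Q - T^2/(2*K) := by rw [hcard]; field_simp; ring
  -- key inequality T^2 ≤ (K-1) Q
  have hxk : x k ≤ x (k+1) := hmono k (k+1) (by omega) (by omega) (by omega)
  set N : ℝ := ∑ i ∈ Icc 1 (k-1), (x i - m) with hNdef
  set P : ℝ := ∑ i ∈ Icc (k+2) (2*k), (x i - m) with hPdef
  have hN : N ≤ 0 := Finset.sum_nonpos (fun i hi => by
    simp only [Finset.mem_Icc] at hi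
    have h1 := hmono i k hi.1 (by omega) (by omega)
    rw [hm]; linarith)
  have hP : 0 ≤ P := Finset.sum_nonneg (fun i hi => by
    simp only [Finset.mem_Icc] at hi
    have h1 := hmono (k+1) i (by omega) (by omega) hi.2
    rw [hm]; linarith)
  have hcardN : ((Icc 1 (k-1)).card : ℝ) = K - 1 := by
    rw [Nat.card_Icc]
    have : k - 1 + 1 - 1 = k - 1 := by omega
    rw [this, Nat.cast_sub (by omega)]; norm_num; exact hKdef.symm
  have hcardP : ((Icc (k+2) (2*k)).card : ℝ) = K - 1 := by
    rw [Nat.card_Icc]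
    have : 2*k + 1 - (k+2) = k - 1 := by omega
    rw [this, Nat.cast_sub (by omega)]; norm_num; exact hKdef.symm
  have hCN : N^2 ≤ (K-1) * ∑ i ∈ Icc 1 (k-1), (x i - m)^2 := by
    have h := sq_sum_le_card_mul_sum_sq (s := Icc 1 (k-1)) (f := fun i => x i - m)
    rwa [hcardN] at h
  have hCP : P^2 ≤ (K-1) * ∑ i ∈ Icc (k+2) (2*k), (x i - m)^2 := by
    have h := sq_sum_le_card_mul_sum_sq (s := Icc (k+2) (2*k)) (f := fun i => x i - m)
    rwa [hcardP] at h
  have hTsplit : T = N + (x k - m) + (x (k+1) - m) + P := split_sum k hk _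
  have hmk : (x k - m) + (x (k+1) - m) = 0 := by rw [hm]; ring
  have hQsplit : Q = (∑ i ∈ Icc 1 (k-1), (x i - m)^2) + (x k - m)^2 + (x (k+1) - m)^2
      + ∑ i ∈ Icc (k+2) (2*k), (x i - m)^2 := split_sum k hk _
  have hkey : T^2 ≤ (K-1) * Q := by
    have hTNP : T = N + P := by rw [hTsplit]; linarith [hmk]
    have h1 : T^2 ≤ N^2 + P^2 := by
      rw [hTNP]
      nlinarith [mul_nonneg (neg_nonneg.mpr hN) hP]
    have h2 : 0 ≤ (K-1) * (x k - m)^2 := mul_nonneg (by linarith) (sq_nonneg _)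
    have h3 : 0 ≤ (K-1) * (x (k+1) - m)^2 := mul_nonneg (by linarith) (sq_nonneg _)
    have h4 : (K-1) * Q = (K-1) * (∑ i ∈ Icc 1 (k-1), (x i - m)^2)
        + (K-1) * (x k - m)^2 + (K-1) * (x (k+1) - m)^2
        + (K-1) * ∑ i ∈ Icc (k+2) (2*k), (x i - m)^2 := by rw [hQsplit]; ring
    linarith [hCN, hCP]
  -- positivity of variance
  have hVpos : 0 < ∑ i ∈ Icc 1 (2*k), (x i - μ)^2 := by
    have hne : x 1 ≠ x (2*k) := ne_of_lt hlt
    have hsub : ({1, 2*k} : Finset ℕ) ⊆ Icc 1 (2*k) := by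
      intro i hi
      simp only [Finset.mem_insert, Finset.mem_singleton] at hi
      simp only [Finset.mem_Icc]; omega
    have hpair : ∑ i ∈ ({1, 2*k} : Finset ℕ), (x i - μ)^2
        = (x 1 - μ)^2 + (x (2*k) - μ)^2 :=
      Finset.sum_pair (by omega)
    have hpos : 0 < (x 1 - μ)^2 + (x (2*k) - μ)^2 := by
      rcases eq_or_ne (x 1) μ with h | h
      · have h2 : x (2*k) - μ ≠ 0 := fun hc => hne (by rw [h]; linarith [sub_eq_zero.mp hc])
        have := sq_nonneg (x 1 - μ)
        have := pow_pos (abs_pos.mpr h2) 2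
        rw [sq_abs] at this; linarith
      · have h2 : x 1 - μ ≠ 0 := sub_ne_zero.mpr h
        have := sq_nonneg (x (2*k) - μ)
        have := pow_pos (abs_pos.mpr h2) 2
        rw [sq_abs] at this; linarith
    calc (0:ℝ) < ∑ i ∈ ({1, 2*k} : Finset ℕ), (x i - μ)^2 := by rw [hpair]; exact hpos
      _ ≤ ∑ i ∈ Icc 1 (2*k), (x i - μ)^2 :=
        Finset.sum_le_sum_of_subset_of_nonneg hsub (fun i _ _ => sq_nonneg _)
  -- finish
  rw [hvar] at hVpos ⊢
  have hKpos : (0:ℝ) < K := by linarith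
  have hWpos : 0 < (Q - T^2/(2*K))/(2*K) := div_pos hVpos (by linarith)
  rw [div_le_iff₀ (Real.sqrt_pos.mpr hWpos),
    ← Real.sqrt_mul (div_nonneg (by linarith) (by linarith))]
  rw [← Real.sqrt_sq_eq_abs]
  apply Real.sqrt_le_sqrt
  have hmμ : m - μ = -(T/(2*K)) := by rw [hμ]; ring
  rw [hmμ]
  have e : (K-1)/(K+1) * ((Q - T^2/(2*K))/(2*K)) - (-(T/(2*K)))^2
      = ((K-1)*Q - T^2)/(2*K*(K+1)) := by
    field_simp; ring
  have hnn : 0 ≤ ((K-1)*Q - T^2)/(2*K*(K+1)) :=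
    div_nonneg (by linarith) (by nlinarith)
  linarith [e, hnn]
end

section
/- Let n = 2k+1 and consider the data with x_1 = ... = x_k = -sqrt((k+1)/k) and x_{k+1} = ... = x_{2k+1} = sqrt(k/(k+1)). Then the mean is 0, the population variance is 1, and the median equals sqrt(k/(k+1)); hence the bound sqrt(k/(k+1)) in the odd-sample Hotelling–Solomons inequality is attained. -/
open Finset

theorem stmt_7 (k n : ℕ) (hk : 1 ≤ k) (hn : n = 2 * k + 1) (x : ℕ → ℝ)
    (hlow : ∀ i, 1 ≤ i → i ≤ k → x i = -Real.sqrt (((k : ℝ) + 1) / k))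
    (hhigh : ∀ i, k + 1 ≤ i → i ≤ 2 * k + 1 → x i = Real.sqrt ((k : ℝ) / (k + 1))) :
    (∑ i ∈ Icc 1 n, x i) / n = 0 ∧
    (∑ i ∈ Icc 1 n, (x i - (∑ j ∈ Icc 1 n, x j) / n) ^ 2) / n = 1 ∧
    x (k + 1) = Real.sqrt ((k : ℝ) / (k + 1)) := by
  have kpos : (0:ℝ) < k := by exact_mod_cast hk
  have k1pos : (0:ℝ) < (k:ℝ) + 1 := by linarith
  set a := Real.sqrt (((k : ℝ) + 1) / k) with ha
  set b := Real.sqrt ((k : ℝ) / (k + 1)) with hb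
  have hIcc : Icc 1 n = Ioc 0 n := by rw [← Finset.Icc_add_one_left_eq_Ioc]; rfl
  have hsplit : ∀ f : ℕ → ℝ, ∑ i ∈ Icc 1 n, f i
      = (∑ i ∈ Ioc 0 k, f i) + ∑ i ∈ Ioc k n, f i := by
    intro f
    rw [hIcc, Finset.sum_Ioc_consecutive _ (Nat.zero_le k) (by omega)]
  have hlow' : ∀ i ∈ Ioc 0 k, x i = -a := by
    intro i hi
    simp only [mem_Ioc] at hi
    exact hlow i hi.1 hi.2
  have hhigh' : ∀ i ∈ Ioc k n, x i = b := by
    intro i hi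
    simp only [mem_Ioc] at hi
    exact hhigh i hi.1 (by omega)
  have hcard1 : (Ioc 0 k).card = k := by simp
  have hcard2 : (Ioc k n).card = k + 1 := by rw [Nat.card_Ioc]; omega
  have h1 : (k:ℝ) * a = Real.sqrt ((k:ℝ)*(k+1)) := by
    rw [ha, show (k:ℝ)*(k+1) = (k:ℝ)^2 * (((k:ℝ)+1)/k) by field_simp,
      Real.sqrt_mul (by positivity), Real.sqrt_sq kpos.le]
  have h2 : ((k:ℝ)+1) * b = Real.sqrt ((k:ℝ)*(k+1)) := by
    rw [hb, show (k:ℝ)*(k+1) = ((k:ℝ)+1)^2 * ((k:ℝ)/(k+1)) by field_simp,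
      Real.sqrt_mul (by positivity), Real.sqrt_sq k1pos.le]
  have ha2 : a^2 = ((k:ℝ)+1)/k := Real.sq_sqrt (by positivity)
  have hb2 : b^2 = (k:ℝ)/((k:ℝ)+1) := Real.sq_sqrt (by positivity)
  have hsum : ∑ i ∈ Icc 1 n, x i = 0 := by
    rw [hsplit x, Finset.sum_congr rfl hlow', Finset.sum_congr rfl hhigh',
      Finset.sum_const, Finset.sum_const, hcard1, hcard2, nsmul_eq_mul, nsmul_eq_mul]
    push_cast
    linarith [h1, h2]
  have e1 : ∑ i ∈ Ioc 0 k, (x i)^2 = (k:ℝ) * a^2 := by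
    calc ∑ i ∈ Ioc 0 k, (x i)^2 = ∑ _i ∈ Ioc 0 k, a^2 :=
          Finset.sum_congr rfl (fun i hi => by rw [hlow' i hi]; ring)
      _ = (k:ℝ) * a^2 := by rw [Finset.sum_const, hcard1, nsmul_eq_mul]
  have e2 : ∑ i ∈ Ioc k n, (x i)^2 = ((k:ℝ)+1) * b^2 := by
    calc ∑ i ∈ Ioc k n, (x i)^2 = ∑ _i ∈ Ioc k n, b^2 :=
          Finset.sum_congr rfl (fun i hi => by rw [hhigh' i hi])
      _ = ((k:ℝ)+1) * b^2 := by rw [Finset.sum_const, hcard2, nsmul_eq_mul]; push_cast; ring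
  have hsq : ∑ i ∈ Icc 1 n, (x i)^2 = (n:ℝ) := by
    rw [hsplit (fun i => (x i)^2), e1, e2, ha2, hb2, hn]
    push_cast
    field_simp
    ring
  refine ⟨by rw [hsum]; simp, ?_, hhigh (k+1) le_rfl (by omega)⟩
  have hn0 : (n:ℝ) ≠ 0 := by
    rw [hn]; push_cast; positivity
  rw [hsum, zero_div]
  simp only [sub_zero]
  rw [hsq, div_self hn0]
end

section
/- Let n = 2k+1 and consider the data with x_1 = ... = x_{k+1} = -sqrt(k/(k+1)) and x_{k+2} = ... = x_{2k+1} = sqrt((k+1)/k). Then the mean is 0, the population variance is 1, and the median equals -sqrt(k/(k+1)); hence (med x - x̄)/s = -sqrt(k/(k+1)). -/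
open Finset

theorem stmt_8 (k n : ℕ) (hk : 1 ≤ k) (hn : n = 2 * k + 1) (x : ℕ → ℝ)
    (hlow : ∀ i, 1 ≤ i → i ≤ k + 1 → x i = -Real.sqrt ((k : ℝ) / (k + 1)))
    (hhigh : ∀ i, k + 2 ≤ i → i ≤ 2 * k + 1 → x i = Real.sqrt (((k : ℝ) + 1) / k)) :
    (∑ i ∈ Icc 1 n, x i) / n = 0 ∧
    (∑ i ∈ Icc 1 n, (x i - (∑ j ∈ Icc 1 n, x j) / n) ^ 2) / n = 1 ∧
    x (k + 1) = -Real.sqrt ((k : ℝ) / (k + 1)) ∧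
    (x (k + 1) - (∑ i ∈ Icc 1 n, x i) / n) /
      Real.sqrt ((∑ i ∈ Icc 1 n, (x i - (∑ j ∈ Icc 1 n, x j) / n) ^ 2) / n) =
      -Real.sqrt ((k : ℝ) / (k + 1)) := by
  subst hn
  set a := Real.sqrt ((k : ℝ) / (k + 1)) with ha
  set b := Real.sqrt (((k : ℝ) + 1) / k) with hb
  have hk0 : (0:ℝ) < k := by exact_mod_cast hk
  have hk1 : (0:ℝ) < (k:ℝ) + 1 := by positivity
  have ha2 : a ^ 2 = (k:ℝ) / (k + 1) := Real.sq_sqrt (by positivity)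
  have hb2 : b ^ 2 = ((k:ℝ) + 1) / k := Real.sq_sqrt (by positivity)
  have hS1 : ((k:ℝ) + 1) * a = Real.sqrt ((k:ℝ) * (k + 1)) := by
    rw [ha, ← Real.sqrt_sq hk1.le, ← Real.sqrt_mul (by positivity)]
    congr 1
    field_simp
    rw [Real.sq_sqrt (by positivity)]
  have hS2 : (k:ℝ) * b = Real.sqrt ((k:ℝ) * (k + 1)) := by
    rw [hb, ← Real.sqrt_sq hk0.le, ← Real.sqrt_mul (by positivity)]
    congr 1
    field_simp
    rw [Real.sq_sqrt (by positivity)]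
  have hIcc : Icc 1 (2 * k + 1) = Ioc 0 (2 * k + 1) := by
    ext i; simp [Nat.lt_iff_add_one_le]
  have hsplit := Finset.sum_Ioc_consecutive x (Nat.zero_le (k + 1)) (by omega : k + 1 ≤ 2 * k + 1)
  have h1 : ∑ i ∈ Ioc 0 (k + 1), x i = ((k:ℝ) + 1) * (-a) := by
    rw [Finset.sum_congr rfl (fun i hi => by
      simp only [Finset.mem_Ioc] at hi
      exact hlow i hi.1 hi.2), Finset.sum_const, Nat.card_Ioc]
    push_cast
    ring
  have h2 : ∑ i ∈ Ioc (k + 1) (2 * k + 1), x i = (k:ℝ) * b := by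
    rw [Finset.sum_congr rfl (fun i hi => by
      simp only [Finset.mem_Ioc] at hi
      exact hhigh i (by omega) hi.2), Finset.sum_const, Nat.card_Ioc]
    have : 2 * k + 1 - (k + 1) = k := by omega
    rw [this]
    push_cast
    ring
  have hsum : ∑ i ∈ Icc 1 (2 * k + 1), x i = 0 := by
    rw [hIcc, ← hsplit, h1, h2]
    rw [mul_neg]
    rw [hS1, hS2]
    ring
  have hmean : (∑ i ∈ Icc 1 (2 * k + 1), x i) / ((2 * k + 1 : ℕ) : ℝ) = 0 := by
    rw [hsum]; simp
  have hsq1 : ∑ i ∈ Ioc 0 (k + 1), (x i) ^ 2 = ((k:ℝ) + 1) * ((k:ℝ) / (k + 1)) := by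
    rw [Finset.sum_congr rfl (fun i hi => show x i ^ 2 = (k:ℝ) / (k + 1) by
      simp only [Finset.mem_Ioc] at hi
      rw [hlow i hi.1 hi.2, ← ha2]
      ring), Finset.sum_const, Nat.card_Ioc]
    push_cast
    ring
  have hsq2 : ∑ i ∈ Ioc (k + 1) (2 * k + 1), (x i) ^ 2 = (k:ℝ) * (((k:ℝ) + 1) / k) := by
    rw [Finset.sum_congr rfl (fun i hi => show x i ^ 2 = ((k:ℝ) + 1) / k by
      simp only [Finset.mem_Ioc] at hi
      rw [hhigh i (by omega) hi.2, hb2]), Finset.sum_const, Nat.card_Ioc]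
    have : 2 * k + 1 - (k + 1) = k := by omega
    rw [this]
    push_cast
    ring
  have hsplitsq := Finset.sum_Ioc_consecutive (fun i => (x i) ^ 2) (Nat.zero_le (k + 1))
    (by omega : k + 1 ≤ 2 * k + 1)
  have hsumsq : ∑ i ∈ Icc 1 (2 * k + 1), (x i) ^ 2 = ((2 * k + 1 : ℕ) : ℝ) := by
    rw [hIcc, ← hsplitsq, hsq1, hsq2]
    push_cast
    field_simp
    ring
  have hvar : (∑ i ∈ Icc 1 (2 * k + 1),
      (x i - (∑ j ∈ Icc 1 (2 * k + 1), x j) / ((2 * k + 1 : ℕ) : ℝ)) ^ 2) /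
      ((2 * k + 1 : ℕ) : ℝ) = 1 := by
    rw [hmean]
    simp only [sub_zero]
    rw [hsumsq]
    have : ((2 * k + 1 : ℕ) : ℝ) ≠ 0 := by positivity
    field_simp
  refine ⟨hmean, hvar, hlow (k + 1) (by omega) le_rfl, ?_⟩
  rw [hvar, hmean, hlow (k + 1) (by omega) le_rfl]
  simp
end

section
/- Let z_1, ..., z_n be reals with ∑z_i = 0 and ∑z_i² = n. Suppose z_i < 0 for 1 ≤ i ≤ ℓ, z_i > 0 for m+1 ≤ i ≤ n (with 1 ≤ ℓ ≤ m ≤ n-1), and z_i = 0 for ℓ < i ≤ m. Set a = -∑_{i=1}^ℓ z_i = ∑_{i=m+1}^n z_i. Then a² ≤ n²/(n/ℓ + n/(n-m)). -/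
open Finset

theorem stmt_11 (n : ℕ) (hn : 2 ≤ n) (z : ℕ → ℝ)
    (hsum : ∑ i ∈ Icc 1 n, z i = 0)
    (hsq : ∑ i ∈ Icc 1 n, z i ^ 2 = n)
    (ℓ m : ℕ) (hℓ : 1 ≤ ℓ) (hℓm : ℓ ≤ m) (hm : m ≤ n - 1)
    (hneg : ∀ i, 1 ≤ i → i ≤ ℓ → z i < 0)
    (hpos : ∀ i, m + 1 ≤ i → i ≤ n → 0 < z i)
    (hzero : ∀ i, ℓ < i → i ≤ m → z i = 0)
    (a : ℝ)
    (ha1 : a = -∑ i ∈ Icc 1 ℓ, z i)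
    (ha2 : a = ∑ i ∈ Icc (m + 1) n, z i) :
    a ^ 2 ≤ (n : ℝ) ^ 2 / ((n : ℝ) / ℓ + (n : ℝ) / ((n - m : ℕ) : ℝ)) := by
  have hmn : m < n := lt_of_le_of_lt hm (Nat.sub_lt (by omega) one_pos)
  have hℓn : ℓ ≤ n := le_trans hℓm (le_of_lt hmn)
  -- split the sum of squares
  have hsplit : (∑ i ∈ Icc 1 ℓ, z i ^ 2) + (∑ i ∈ Icc (m+1) n, z i ^ 2) = n := by
    have h1 : Icc 1 n = Ioc 0 n := Finset.Icc_add_one_left_eq_Ioc 0 n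
    have h2 : Icc 1 ℓ = Ioc 0 ℓ := Finset.Icc_add_one_left_eq_Ioc 0 ℓ
    have h3 : Icc (m+1) n = Ioc m n := Finset.Icc_add_one_left_eq_Ioc m n
    have hmid : ∑ i ∈ Ioc ℓ m, z i ^ 2 = 0 := by
      apply Finset.sum_eq_zero
      intro i hi
      rw [Finset.mem_Ioc] at hi
      rw [hzero i hi.1 hi.2]; ring
    have := Finset.sum_Ioc_consecutive (fun i => z i ^ 2) (Nat.zero_le ℓ) hℓn
    have h4 := Finset.sum_Ioc_consecutive (fun i => z i ^ 2) hℓm (le_of_lt hmn)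
    rw [h1] at hsq
    rw [h2, h3]
    linarith [hsq, hmid]
  have hS1 : a ^ 2 ≤ (ℓ : ℝ) * ∑ i ∈ Icc 1 ℓ, z i ^ 2 := by
    have h := sq_sum_le_card_mul_sum_sq (s := Icc 1 ℓ) (f := z)
    have he : a ^ 2 = (∑ i ∈ Icc 1 ℓ, z i) ^ 2 := by rw [ha1]; ring
    rw [Nat.card_Icc, Nat.add_sub_cancel] at h
    rw [he]; exact h
  have hS2 : a ^ 2 ≤ ((n - m : ℕ) : ℝ) * ∑ i ∈ Icc (m+1) n, z i ^ 2 := by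
    have h := sq_sum_le_card_mul_sum_sq (s := Icc (m+1) n) (f := z)
    have hc : (Icc (m+1) n).card = n - m := by rw [Nat.card_Icc]; omega
    rw [hc, ← ha2] at h
    exact h
  have hℓpos : (0:ℝ) < ℓ := by exact_mod_cast hℓ
  have hnmpos : (0:ℝ) < ((n - m : ℕ) : ℝ) := by
    have : 0 < n - m := by omega
    exact_mod_cast this
  have hnpos : (0:ℝ) < n := by positivity
  have key : a ^ 2 / ℓ + a ^ 2 / ((n-m : ℕ):ℝ) ≤ n := by
    rw [div_add_div _ _ (ne_of_gt hℓpos) (ne_of_gt hnmpos), div_le_iff₀ (by positivity)]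
    have e1 : a ^ 2 ≤ (ℓ : ℝ) * ∑ i ∈ Icc 1 ℓ, z i ^ 2 := hS1
    nlinarith [hS1, hS2, hsplit, mul_pos hℓpos hnmpos]
  have hden : (0:ℝ) < (n : ℝ) / ℓ + (n : ℝ) / ((n - m : ℕ) : ℝ) := by positivity
  rw [le_div_iff₀ hden]
  have expand : a ^ 2 * ((n:ℝ)/ℓ + (n:ℝ)/((n-m:ℕ):ℝ)) = (n:ℝ) * (a^2/ℓ + a^2/((n-m:ℕ):ℝ)) := by
    field_simp
  rw [expand]
  nlinarith [mul_le_mul_of_nonneg_left key (le_of_lt hnpos)]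
end

section
/- Let z_1 ≤ ... ≤ z_n be reals with ∑z_i = 0 and ∑z_i² = n, where n = 2k+1, k ≥ 1. If z_{k+1} > 0, then ∑_{i=k+1}^n z_i ≥ (k+1) z_{k+1} and z_{k+1} ≤ sqrt(k/(k+1)). -/
open Finset

theorem stmt_12 (k n : ℕ) (hk : 1 ≤ k) (hn : n = 2 * k + 1) (z : ℕ → ℝ)
    (hmono : ∀ i j, 1 ≤ i → i ≤ j → j ≤ n → z i ≤ z j)
    (hsum : ∑ i ∈ Icc 1 n, z i = 0)
    (hsq : ∑ i ∈ Icc 1 n, z i ^ 2 = n)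
    (hpos : 0 < z (k + 1)) :
    ((k : ℝ) + 1) * z (k + 1) ≤ ∑ i ∈ Icc (k + 1) n, z i ∧
    z (k + 1) ≤ Real.sqrt ((k : ℝ) / (k + 1)) := by
  have hkn : k + 1 ≤ n := by omega
  have hcard2 : (Icc (k + 1) n).card = k + 1 := by
    rw [Nat.card_Icc]; omega
  -- part 1
  have h1 : ((k : ℝ) + 1) * z (k + 1) ≤ ∑ i ∈ Icc (k + 1) n, z i := by
    have : ∑ i ∈ Icc (k + 1) n, z (k + 1) ≤ ∑ i ∈ Icc (k + 1) n, z i := by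
      apply Finset.sum_le_sum
      intro i hi
      simp only [mem_Icc] at hi
      exact hmono (k + 1) i (by omega) hi.1 hi.2
    rwa [Finset.sum_const, hcard2, nsmul_eq_mul, Nat.cast_add, Nat.cast_one] at this
  refine ⟨h1, ?_⟩
  -- split sums
  have hsplit : Icc 1 n = Icc 1 k ∪ Icc (k + 1) n := by
    ext x; simp only [Finset.mem_union, Finset.mem_Icc]; omega
  have hdisj : Disjoint (Icc 1 k) (Icc (k + 1) n) := by
    simp [Finset.disjoint_left, Finset.mem_Icc]; omega
  have hsumsplit : ∑ i ∈ Icc 1 k, z i + ∑ i ∈ Icc (k + 1) n, z i = 0 := by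
    rw [← Finset.sum_union hdisj, ← hsplit]; exact hsum
  have hsqsplit : ∑ i ∈ Icc 1 k, z i ^ 2 + ∑ i ∈ Icc (k + 1) n, z i ^ 2 = (n : ℝ) := by
    rw [← Finset.sum_union hdisj, ← hsplit]; exact hsq
  set B := ∑ i ∈ Icc (k + 1) n, z i with hB
  have hA : ∑ i ∈ Icc 1 k, z i = -B := by linarith
  -- Cauchy-Schwarz on lower half
  have hcs : B ^ 2 ≤ (k : ℝ) * ∑ i ∈ Icc 1 k, z i ^ 2 := by
    have := sq_sum_le_card_mul_sum_sq (s := Icc 1 k) (f := z)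
    rw [hA] at this
    simpa [Nat.card_Icc] using this
  -- squares on upper half
  have hsq2 : ((k : ℝ) + 1) * z (k + 1) ^ 2 ≤ ∑ i ∈ Icc (k + 1) n, z i ^ 2 := by
    have : ∑ i ∈ Icc (k + 1) n, z (k + 1) ^ 2 ≤ ∑ i ∈ Icc (k + 1) n, z i ^ 2 := by
      apply Finset.sum_le_sum
      intro i hi
      simp only [mem_Icc] at hi
      have hz : z (k + 1) ≤ z i := hmono (k + 1) i (by omega) hi.1 hi.2
      exact pow_le_pow_left₀ hpos.le hz 2
    rwa [Finset.sum_const, hcard2, nsmul_eq_mul, Nat.cast_add, Nat.cast_one] at this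
  have hkpos : (0 : ℝ) < k := by exact_mod_cast hk
  have hBpos : 0 < B := lt_of_lt_of_le (by positivity) h1
  have hB2 : ((k : ℝ) + 1) ^ 2 * z (k + 1) ^ 2 ≤ B ^ 2 := by
    have := mul_le_mul h1 h1 (by positivity) hBpos.le
    nlinarith
  have hncast : (n : ℝ) = 2 * k + 1 := by rw [hn]; push_cast; ring
  have hzsq : z (k + 1) ^ 2 ≤ (k : ℝ) / (k + 1) := by
    rw [le_div_iff₀ (by positivity : (0:ℝ) < (k:ℝ)+1)]
    nlinarith [hcs, hsq2, hsqsplit, hB2]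
  exact (Real.le_sqrt hpos.le (by positivity)).mpr hzsq
end

section
/- Let z_1 ≤ ... ≤ z_n be reals with ∑z_i = 0 and ∑z_i² = n, where n = 2k, k ≥ 2. If 0 < z_k ≤ z_{k+1}, then (z_k + z_{k+1})/2 ≤ sqrt((k-1)/(k+1)). -/
open Finset

theorem stmt_13 (k n : ℕ) (hk : 2 ≤ k) (hn : n = 2 * k) (z : ℕ → ℝ)
    (hmono : ∀ i j, 1 ≤ i → i ≤ j → j ≤ n → z i ≤ z j)
    (hsum : ∑ i ∈ Icc 1 n, z i = 0)
    (hsq : ∑ i ∈ Icc 1 n, z i ^ 2 = n)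
    (hpos : 0 < z k) (hle : z k ≤ z (k + 1)) :
    (z k + z (k + 1)) / 2 ≤ Real.sqrt (((k : ℝ) - 1) / (k + 1)) := by
  subst hn
  have hk' : (2:ℝ) ≤ (k:ℝ) := by exact_mod_cast hk
  set t := z k with ht
  set s := z (k+1) with hs
  have hspos : 0 < s := lt_of_lt_of_le hpos hle
  -- split the index set
  have hsplit : Icc 1 (2*k) = Icc 1 (k-1) ∪ Icc k (2*k) := by
    ext x; simp only [mem_Icc, mem_union]; omega
  have hdisj : Disjoint (Icc 1 (k-1)) (Icc k (2*k)) := by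
    simp only [Finset.disjoint_left, mem_Icc]; omega
  have hins : Icc k (2*k) = insert k (Icc (k+1) (2*k)) := by
    ext x; simp only [mem_Icc, mem_insert]; omega
  have hknotmem : k ∉ Icc (k+1) (2*k) := by simp
  -- abbreviations
  set A := ∑ i ∈ Icc 1 (k-1), z i with hA
  set Q1 := ∑ i ∈ Icc 1 (k-1), z i ^ 2 with hQ1
  set S2 := ∑ i ∈ Icc (k+1) (2*k), z i with hS2
  set Q2 := ∑ i ∈ Icc (k+1) (2*k), z i ^ 2 with hQ2
  have esum : A + (t + S2) = 0 := by
    rw [hsplit, Finset.sum_union hdisj, hins, Finset.sum_insert hknotmem] at hsum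
    linarith [hsum]
  have esq : Q1 + (t^2 + Q2) = 2*(k:ℝ) := by
    rw [hsplit, Finset.sum_union hdisj, hins, Finset.sum_insert hknotmem] at hsq
    push_cast at hsq
    linarith [hsq]
  -- cardinalities
  have hcard2 : (Icc (k+1) (2*k)).card = k := by rw [Nat.card_Icc]; omega
  have hcard1 : (Icc 1 (k-1)).card = k - 1 := by rw [Nat.card_Icc]; omega
  -- lower bound on S2
  have hS2ge : (k:ℝ) * s ≤ S2 := by
    have := Finset.card_nsmul_le_sum (Icc (k+1) (2*k)) z s (fun i hi => by
      simp only [mem_Icc] at hi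
      exact hmono (k+1) i (by omega) hi.1 hi.2)
    rw [hcard2, nsmul_eq_mul] at this
    exact_mod_cast this
  -- lower bound on Q2
  have hQ2ge : (k:ℝ) * s^2 ≤ Q2 := by
    have := Finset.card_nsmul_le_sum (Icc (k+1) (2*k)) (fun i => z i ^ 2) (s^2)
      (fun i hi => by
        simp only [mem_Icc] at hi
        have h1 : s ≤ z i := hmono (k+1) i (by omega) hi.1 hi.2
        show s ^ 2 ≤ z i ^ 2
        exact pow_le_pow_left₀ hspos.le h1 2)
    rw [hcard2, nsmul_eq_mul] at this
    exact_mod_cast this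
  -- Cauchy-Schwarz on the first k-1 terms
  have hC : A^2 ≤ ((k:ℝ) - 1) * Q1 := by
    have := sq_sum_le_card_mul_sum_sq (s := Icc 1 (k-1)) (f := z)
    rw [hcard1] at this
    have hc : ((k - 1 : ℕ) : ℝ) = (k:ℝ) - 1 := by
      have : 1 ≤ k := by omega
      push_cast [Nat.cast_sub this]; ring
    rw [hc] at this
    exact this
  set m := (t + s)/2 with hm
  have hmpos : 0 < m := by rw [hm]; linarith
  -- P := t + S2 ≥ (k+1) m
  have hP : ((k:ℝ)+1) * m ≤ t + S2 := by
    have h1 : (0:ℝ) ≤ ((k:ℝ) - 1) * (s - t) := by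
      apply mul_nonneg <;> linarith
    rw [hm]; nlinarith [hS2ge]
  -- t^2 + Q2 ≥ (k+1) m^2
  have hQ : ((k:ℝ)+1) * m^2 ≤ t^2 + Q2 := by
    have h2 : (0:ℝ) ≤ (3*(k:ℝ)-1)*s + ((k:ℝ)-3)*t := by
      nlinarith [mul_nonneg (by linarith : (0:ℝ) ≤ 3*(k:ℝ)-1) (by linarith : (0:ℝ) ≤ s - t)]
    have h3 : (0:ℝ) ≤ (s - t) * ((3*(k:ℝ)-1)*s + ((k:ℝ)-3)*t) :=
      mul_nonneg (by linarith) h2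
    rw [hm]; nlinarith [hQ2ge]
  -- A^2 ≥ ((k+1) m)^2
  have hA2 : (((k:ℝ)+1) * m)^2 ≤ A^2 := by
    have hAeq : A = -(t + S2) := by linarith
    calc (((k:ℝ)+1) * m)^2 ≤ (t + S2)^2 := pow_le_pow_left₀ (by positivity) hP 2
      _ = A^2 := by rw [hAeq]; ring
  -- conclude m^2 ≤ (k-1)/(k+1)
  have hmsq : m^2 ≤ ((k:ℝ) - 1) / ((k:ℝ) + 1) := by
    rw [le_div_iff₀ (by linarith : (0:ℝ) < (k:ℝ)+1)]
    have key : 2*(k:ℝ) * (m^2 * ((k:ℝ)+1)) ≤ 2*(k:ℝ) * ((k:ℝ)-1) := by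
      have h4 : ((k:ℝ)-1) * (((k:ℝ)+1) * m^2) ≤ ((k:ℝ)-1) * (t^2 + Q2) :=
        mul_le_mul_of_nonneg_left hQ (by linarith)
      have h5 : ((k:ℝ)-1) * (Q1 + (t^2 + Q2)) = ((k:ℝ)-1) * (2*(k:ℝ)) := by rw [esq]
      linarith [hC, hA2, h4, h5]
    exact le_of_mul_le_mul_left key (by linarith)
  exact (Real.le_sqrt' hmpos).mpr hmsq
end

section
/- Let z_1 ≤ ... ≤ z_n be reals with ∑z_i = 0 and ∑z_i² = n, where n = 2k, k ≥ 2. If z_{k+1} > -z_k ≥ 0, then (z_k + z_{k+1})/2 ≤ 1/2. -/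
open Finset

theorem stmt_14 (k n : ℕ) (hk : 2 ≤ k) (hn : n = 2 * k) (z : ℕ → ℝ)
    (hmono : ∀ i j, 1 ≤ i → i ≤ j → j ≤ n → z i ≤ z j)
    (hsum : ∑ i ∈ Icc 1 n, z i = 0)
    (hsq : ∑ i ∈ Icc 1 n, z i ^ 2 = n)
    (h1 : -z k < z (k + 1)) (h2 : 0 ≤ -z k) :
    (z k + z (k + 1)) / 2 ≤ 1 / 2 := by
  subst hn
  have hkR : (0:ℝ) < (k:ℝ) := by positivity
  have hicc : Icc 1 (2*k) = Ioc 0 (2*k) := Finset.Icc_add_one_left_eq_Ioc 0 _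
  rw [hicc] at hsum hsq
  set S := ∑ i ∈ Ioc k (2*k), z i with hS
  have hsplit : ∑ i ∈ Ioc 0 k, z i + S = ∑ i ∈ Ioc 0 (2*k), z i :=
    Finset.sum_Ioc_consecutive _ (by omega) (by omega)
  have hsplitsq : ∑ i ∈ Ioc 0 k, z i ^ 2 + ∑ i ∈ Ioc k (2*k), z i ^ 2
      = ∑ i ∈ Ioc 0 (2*k), z i ^ 2 :=
    Finset.sum_Ioc_consecutive _ (by omega) (by omega)
  have hneg : ∑ i ∈ Ioc 0 k, z i = -S := by linarith [hsplit, hsum]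
  have c1 : (∑ i ∈ Ioc 0 k, z i) ^ 2 ≤ (k:ℝ) * ∑ i ∈ Ioc 0 k, z i ^ 2 := by
    have := sq_sum_le_card_mul_sum_sq (s := Ioc 0 k) (f := z)
    simpa [Nat.card_Ioc] using this
  have c2 : S ^ 2 ≤ (k:ℝ) * ∑ i ∈ Ioc k (2*k), z i ^ 2 := by
    have := sq_sum_le_card_mul_sum_sq (s := Ioc k (2*k)) (f := z)
    have hc : (2*k - k) = k := by omega
    simpa [Nat.card_Ioc, hc] using this
  have hsq2 : ∑ i ∈ Ioc 0 (2*k), z i ^ 2 = 2 * (k:ℝ) := by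
    rw [hsq]; push_cast; ring
  have hS2 : S ^ 2 ≤ (k:ℝ) ^ 2 := by
    rw [hneg] at c1
    nlinarith [c1, c2, hsplitsq, hsq2]
  have hSk : S ≤ (k:ℝ) := by nlinarith
  have hlow : (k:ℝ) * z (k+1) ≤ S := by
    have : ∑ i ∈ Ioc k (2*k), z (k+1) ≤ S := by
      apply Finset.sum_le_sum
      intro i hi
      simp only [mem_Ioc] at hi
      exact hmono (k+1) i (by omega) (by omega) (by omega)
    have hc : (2*k - k) = k := by omega
    simpa [Finset.sum_const, Nat.card_Ioc, hc, nsmul_eq_mul] using this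
  have hz1 : z (k+1) ≤ 1 := by
    have := hlow.trans hSk
    nlinarith
  linarith
end

section
/- Let x_1 ≤ ... ≤ x_n be reals with x_1 < x_n, mean x̄ and population standard deviation s > 0. Then for each i, -sqrt((n-i)/i) ≤ (x_i - x̄)/s ≤ sqrt((i-1)/(n+1-i)). -/
open Finset

lemma hb_aux (A B : Finset ℕ) (hD : Disjoint A B) (f : ℕ → ℝ) (v s : ℝ)
    (hsum : ∑ j ∈ A ∪ B, f j = 0)
    (hsq : ∑ j ∈ A ∪ B, (f j) ^ 2 = ((A.card : ℝ) + B.card) * s ^ 2)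
    (hv : 0 < v)
    (hvB : ∀ j ∈ B, v ≤ f j)
    (hBpos : 0 < B.card) :
    v ^ 2 ≤ ((A.card : ℝ) / B.card) * s ^ 2 := by
  have hcb : (0:ℝ) < B.card := by exact_mod_cast hBpos
  have hca : (0:ℝ) ≤ A.card := by positivity
  have hBsum : (B.card : ℝ) * v ≤ ∑ j ∈ B, f j := by
    have := Finset.card_nsmul_le_sum B f v hvB
    simpa [nsmul_eq_mul] using this
  have hBsq : (B.card : ℝ) * v ^ 2 ≤ ∑ j ∈ B, (f j) ^ 2 := by
    have : ∀ j ∈ B, v ^ 2 ≤ (f j) ^ 2 := by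
      intro j hj
      have := hvB j hj
      nlinarith
    have h2 := Finset.card_nsmul_le_sum B (fun j => (f j) ^ 2) (v ^ 2) this
    simpa [nsmul_eq_mul] using h2
  have hAsum : ∑ j ∈ A, f j = -∑ j ∈ B, f j := by
    have := Finset.sum_union hD (f := f)
    rw [hsum] at this
    linarith
  have hAsq : ∑ j ∈ A, (f j) ^ 2 = ((A.card : ℝ) + B.card) * s ^ 2 - ∑ j ∈ B, (f j) ^ 2 := by
    have := Finset.sum_union hD (f := fun j => (f j) ^ 2)
    rw [hsq] at this
    linarith
  have hCS : (∑ j ∈ A, f j) ^ 2 ≤ (A.card : ℝ) * ∑ j ∈ A, (f j) ^ 2 :=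
    sq_sum_le_card_mul_sum_sq
  have hBsumpos : (0:ℝ) ≤ ∑ j ∈ B, f j := le_trans (by positivity) hBsum
  have key : ((B.card : ℝ) * v) ^ 2 ≤ (A.card : ℝ) * (((A.card : ℝ) + B.card) * s ^ 2 - (B.card : ℝ) * v ^ 2) := by
    calc ((B.card : ℝ) * v) ^ 2 ≤ (∑ j ∈ B, f j) ^ 2 := pow_le_pow_left₀ (by positivity) hBsum 2
      _ = (∑ j ∈ A, f j) ^ 2 := by rw [hAsum]; ring
      _ ≤ (A.card : ℝ) * ∑ j ∈ A, (f j) ^ 2 := hCS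
      _ ≤ _ := by rw [hAsq]; nlinarith
  rw [div_mul_eq_mul_div, le_div_iff₀ hcb]
  nlinarith [sq_nonneg v, mul_pos hcb hcb]

theorem stmt_15 (n : ℕ) (hn : 2 ≤ n) (x : ℕ → ℝ)
    (hmono : ∀ i j, 1 ≤ i → i ≤ j → j ≤ n → x i ≤ x j)
    (hlt : x 1 < x n)
    (s : ℝ)
    (hs : s = Real.sqrt ((∑ i ∈ Icc 1 n, (x i - (∑ j ∈ Icc 1 n, x j) / n) ^ 2) / n))
    (hspos : 0 < s) :
    ∀ i, 1 ≤ i → i ≤ n →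
      -Real.sqrt (((n - i : ℕ) : ℝ) / i) ≤ (x i - (∑ j ∈ Icc 1 n, x j) / n) / s ∧
      (x i - (∑ j ∈ Icc 1 n, x j) / n) / s ≤ Real.sqrt (((i - 1 : ℕ) : ℝ) / ((n + 1 - i : ℕ) : ℝ)) := by
  intro i hi1 hin
  set m : ℝ := (∑ j ∈ Icc 1 n, x j) / n with hm
  have hn0 : (0:ℝ) < n := by positivity
  have hsum0 : ∑ j ∈ Icc 1 n, (x j - m) = 0 := by
    rw [Finset.sum_sub_distrib, Finset.sum_const, Nat.card_Icc]
    have : ((n + 1 - 1 : ℕ) : ℝ) = (n : ℝ) := by push_cast [Nat.add_sub_cancel]; ring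
    rw [nsmul_eq_mul, this, hm]
    field_simp
    ring
  have hQ : ∑ j ∈ Icc 1 n, (x j - m) ^ 2 = (n : ℝ) * s ^ 2 := by
    have h0 : (0:ℝ) ≤ (∑ j ∈ Icc 1 n, (x j - m) ^ 2) / n := by positivity
    have : s ^ 2 = (∑ j ∈ Icc 1 n, (x j - m) ^ 2) / n := by
      rw [hs, Real.sq_sqrt h0]
    rw [this]
    field_simp
  constructor
  · -- lower bound
    rcases le_or_gt 0 (x i - m) with h | h
    · have h1 : -Real.sqrt (((n - i : ℕ) : ℝ) / i) ≤ 0 :=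
        neg_nonpos.mpr (Real.sqrt_nonneg _)
      exact h1.trans (by positivity)
    · set A := Icc (i+1) n with hA
      set B := Icc 1 i with hB
      have hU : A ∪ B = Icc 1 n := by ext k; simp [hA, hB, mem_Icc, mem_union]; omega
      have hD : Disjoint A B := by
        rw [Finset.disjoint_left]; intro k hk1 hk2
        simp [hA, hB, mem_Icc] at hk1 hk2; omega
      have cardA : A.card = n - i := by rw [hA, Nat.card_Icc]; omega
      have cardB : B.card = i := by rw [hB, Nat.card_Icc]; omega
      have hcn : A.card + B.card = n := by rw [cardA, cardB]; omega
      have hcards : ((A.card : ℝ) + B.card) = (n : ℝ) := by exact_mod_cast hcn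
      have hmain := hb_aux A B hD (fun j => -(x j - m)) (-(x i - m)) s
        (by rw [hU]; rw [show ∑ j ∈ Icc 1 n, (fun j => -(x j - m)) j = -∑ j ∈ Icc 1 n, (x j - m) by rw [← Finset.sum_neg_distrib], hsum0, neg_zero])
        (by rw [hU, hcards]; simp only [neg_sq]; exact hQ)
        (by linarith)
        (by intro j hj; simp only [hB, mem_Icc] at hj
            have := hmono j i hj.1 hj.2 hin
            show -(x i - m) ≤ -(x j - m); linarith)
        (by rw [cardB]; omega)
      rw [cardA, cardB] at hmain
      rw [neg_sq] at hmain
      have hr : (0:ℝ) ≤ ((n - i : ℕ) : ℝ) / (i : ℝ) := by positivity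
      have hle : -(x i - m) ≤ Real.sqrt (((n - i : ℕ) : ℝ) / i) * s := by
        have h1 : -(x i - m) = Real.sqrt ((-(x i - m)) ^ 2) := by
          rw [Real.sqrt_sq (by linarith)]
        have h2 : ((-(x i - m)) ^ 2) ≤ (((n - i : ℕ) : ℝ) / i) * s ^ 2 := by
          rw [neg_sq]; exact hmain
        calc -(x i - m) = Real.sqrt ((-(x i - m)) ^ 2) := h1
          _ ≤ Real.sqrt ((((n - i : ℕ) : ℝ) / i) * s ^ 2) := Real.sqrt_le_sqrt h2
          _ = Real.sqrt (((n - i : ℕ) : ℝ) / i) * s := by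
            rw [Real.sqrt_mul hr, Real.sqrt_sq hspos.le]
      rw [le_div_iff₀ hspos]
      linarith
  · -- upper bound
    rcases le_or_gt (x i - m) 0 with h | h
    · have h1 : (x i - m) / s ≤ 0 := div_nonpos_of_nonpos_of_nonneg h hspos.le
      exact h1.trans (by positivity)
    · set A := Icc 1 (i-1) with hA
      set B := Icc i n with hB
      have hU : A ∪ B = Icc 1 n := by ext k; simp [hA, hB, mem_Icc, mem_union]; omega
      have hD : Disjoint A B := by
        rw [Finset.disjoint_left]; intro k hk1 hk2
        simp [hA, hB, mem_Icc] at hk1 hk2; omega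
      have cardA : A.card = i - 1 := by rw [hA, Nat.card_Icc]; omega
      have cardB : B.card = n + 1 - i := by rw [hB, Nat.card_Icc]
      have hcn : A.card + B.card = n := by rw [cardA, cardB]; omega
      have hcards : ((A.card : ℝ) + B.card) = (n : ℝ) := by exact_mod_cast hcn
      have hmain := hb_aux A B hD (fun j => x j - m) (x i - m) s
        (by rw [hU]; exact hsum0)
        (by rw [hU, hcards]; exact hQ)
        h
        (by intro j hj; simp only [hB, mem_Icc] at hj
            have := hmono i j hi1 hj.1 hj.2
            show x i - m ≤ x j - m; linarith)
        (by rw [cardB]; omega)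
      rw [cardA, cardB] at hmain
      have hr : (0:ℝ) ≤ ((i - 1 : ℕ) : ℝ) / ((n + 1 - i : ℕ) : ℝ) := by positivity
      have hle : x i - m ≤ Real.sqrt (((i - 1 : ℕ) : ℝ) / ((n + 1 - i : ℕ) : ℝ)) * s := by
        calc x i - m = Real.sqrt ((x i - m) ^ 2) := by rw [Real.sqrt_sq h.le]
          _ ≤ Real.sqrt ((((i - 1 : ℕ) : ℝ) / ((n + 1 - i : ℕ) : ℝ)) * s ^ 2) :=
            Real.sqrt_le_sqrt hmain
          _ = _ := by rw [Real.sqrt_mul hr, Real.sqrt_sq hspos.le]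
      rw [div_le_iff₀ hspos]
      exact hle
end

section
/- Let x_1 ≤ ... ≤ x_n be reals with x_1 < x_n, mean x̄ and population standard deviation s > 0. Then 1/sqrt(n-1) ≤ (x_n - x̄)/s ≤ sqrt(n-1) and -sqrt(n-1) ≤ (x_1 - x̄)/s ≤ -1/sqrt(n-1). -/
open Finset

theorem stmt_16 (n : ℕ) (hn : 2 ≤ n) (x : ℕ → ℝ)
    (hmono : ∀ i j, 1 ≤ i → i ≤ j → j ≤ n → x i ≤ x j)
    (hlt : x 1 < x n)
    (s : ℝ)
    (hs : s = Real.sqrt ((∑ i ∈ Icc 1 n, (x i - (∑ j ∈ Icc 1 n, x j) / n) ^ 2) / n))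
    (hspos : 0 < s) :
    (1 / Real.sqrt ((n : ℝ) - 1) ≤ (x n - (∑ j ∈ Icc 1 n, x j) / n) / s ∧
      (x n - (∑ j ∈ Icc 1 n, x j) / n) / s ≤ Real.sqrt ((n : ℝ) - 1)) ∧
    (-Real.sqrt ((n : ℝ) - 1) ≤ (x 1 - (∑ j ∈ Icc 1 n, x j) / n) / s ∧
      (x 1 - (∑ j ∈ Icc 1 n, x j) / n) / s ≤ -(1 / Real.sqrt ((n : ℝ) - 1))) := by
  have hnR : (2:ℝ) ≤ (n:ℝ) := by exact_mod_cast hn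
  have hnpos : (0:ℝ) < n := by linarith
  set μ := (∑ j ∈ Icc 1 n, x j) / n with hμ
  have hmem1 : 1 ∈ Icc 1 n := by simp; omega
  have hmemn : n ∈ Icc 1 n := by simp; omega
  have hcard : (Icc 1 n).card = n := by simp
  have hsum0 : ∑ i ∈ Icc 1 n, (x i - μ) = 0 := by
    rw [Finset.sum_sub_distrib, Finset.sum_const, hcard, hμ, nsmul_eq_mul]
    field_simp
    ring
  have hμlt : μ < x n := by
    have h : ∑ j ∈ Icc 1 n, x j < ∑ j ∈ Icc 1 n, x n := by
      apply Finset.sum_lt_sum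
      · intro i hi
        exact hmono i n (mem_Icc.mp hi).1 (mem_Icc.mp hi).2 le_rfl
      · exact ⟨1, hmem1, hlt⟩
    rw [Finset.sum_const, hcard, nsmul_eq_mul] at h
    rw [hμ, div_lt_iff₀ hnpos]
    linarith
  have hltμ : x 1 < μ := by
    have h : ∑ j ∈ Icc 1 n, x 1 < ∑ j ∈ Icc 1 n, x j := by
      apply Finset.sum_lt_sum
      · intro i hi
        exact hmono 1 i le_rfl (mem_Icc.mp hi).1 (mem_Icc.mp hi).2
      · exact ⟨n, hmemn, hlt⟩
    rw [Finset.sum_const, hcard, nsmul_eq_mul] at h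
    rw [hμ, lt_div_iff₀ hnpos]
    linarith
  have hs2 : s ^ 2 = (∑ i ∈ Icc 1 n, (x i - μ) ^ 2) / n := by
    rw [hs, Real.sq_sqrt]
    positivity
  have hns2 : (n:ℝ) * s ^ 2 = ∑ i ∈ Icc 1 n, (x i - μ) ^ 2 := by
    rw [hs2]; field_simp
  -- Samuelson inequality via Cauchy-Schwarz
  have samuel : ∀ k ∈ Icc 1 n, (x k - μ) ^ 2 ≤ ((n:ℝ) - 1) * s ^ 2 := by
    intro k hk
    have hsum_er : ∑ i ∈ (Icc 1 n).erase k, (x i - μ) + (x k - μ) = 0 := by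
      rw [Finset.sum_erase_add _ _ hk]; exact hsum0
    have hsq_er : ∑ i ∈ (Icc 1 n).erase k, (x i - μ) ^ 2 + (x k - μ) ^ 2
        = (n:ℝ) * s ^ 2 := by
      rw [Finset.sum_erase_add _ _ hk]; exact hns2.symm
    have hcardE : (((Icc 1 n).erase k).card : ℝ) = (n:ℝ) - 1 := by
      rw [Finset.card_erase_of_mem hk, hcard]
      have : 1 ≤ n := by omega
      push_cast [Nat.cast_sub this]
      ring
    have hCS := sq_sum_le_card_mul_sum_sq (s := (Icc 1 n).erase k)
      (f := fun i => x i - μ)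
    rw [hcardE] at hCS
    have h1 : (∑ i ∈ (Icc 1 n).erase k, (x i - μ)) = -(x k - μ) := by linarith
    rw [h1] at hCS
    have h2 : (-(x k - μ)) ^ 2 = (x k - μ) ^ 2 := by ring
    rw [h2] at hCS
    nlinarith [sq_nonneg (x k - μ)]
  have hd1 := samuel 1 hmem1
  have hdn := samuel n hmemn
  set c := Real.sqrt ((n:ℝ) - 1) with hc
  have hcpos : 0 < c := Real.sqrt_pos.mpr (by linarith)
  have hc2 : c ^ 2 = (n:ℝ) - 1 := Real.sq_sqrt (by linarith)
  have hcs : 0 < c * s := mul_pos hcpos hspos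
  -- |d| ≤ c * s bounds
  have habsn : x n - μ ≤ c * s := by nlinarith
  have habs1 : -(x 1 - μ) ≤ c * s := by nlinarith
  -- key: s^2 ≤ (μ - x 1) * (x n - μ)
  have hkey : s ^ 2 ≤ (μ - x 1) * (x n - μ) := by
    have h1 : ∑ i ∈ Icc 1 n, (x i - μ) ^ 2
        = ∑ i ∈ Icc 1 n, (x i - μ) * ((x i - μ) - (x 1 - μ)) := by
      have : ∀ i, (x i - μ) * ((x i - μ) - (x 1 - μ))
          = (x i - μ) ^ 2 - (x 1 - μ) * (x i - μ) := by intro i; ring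
      simp only [this]
      rw [Finset.sum_sub_distrib, ← Finset.mul_sum, hsum0, mul_zero, sub_zero]
    have h2 : ∑ i ∈ Icc 1 n, (x i - μ) * ((x i - μ) - (x 1 - μ))
        ≤ ∑ i ∈ Icc 1 n, (x n - μ) * ((x i - μ) - (x 1 - μ)) := by
      apply Finset.sum_le_sum
      intro i hi
      have hx1 : x 1 ≤ x i := hmono 1 i le_rfl (mem_Icc.mp hi).1 (mem_Icc.mp hi).2
      have hxn : x i ≤ x n := hmono i n (mem_Icc.mp hi).1 (mem_Icc.mp hi).2 le_rfl
      exact mul_le_mul_of_nonneg_right (by linarith : x i - μ ≤ x n - μ) (by linarith)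
    have h3 : ∑ i ∈ Icc 1 n, (x n - μ) * ((x i - μ) - (x 1 - μ))
        = (x n - μ) * (-(n:ℝ) * (x 1 - μ)) := by
      rw [← Finset.mul_sum, Finset.sum_sub_distrib, hsum0, Finset.sum_const, hcard,
        nsmul_eq_mul]
      ring
    have : (n:ℝ) * s ^ 2 ≤ (x n - μ) * (-(n:ℝ) * (x 1 - μ)) := by
      rw [hns2, h1]; rw [h3] at h2; linarith [h2]
    nlinarith
  have habs1' : μ - x 1 ≤ c * s := by linarith
  have hstepn : s * s ≤ s * (c * (x n - μ)) := by
    have hA : (μ - x 1) * (x n - μ) ≤ (c * s) * (x n - μ) :=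
      mul_le_mul_of_nonneg_right habs1' (by linarith)
    calc s * s = s ^ 2 := by ring
      _ ≤ (μ - x 1) * (x n - μ) := hkey
      _ ≤ (c * s) * (x n - μ) := hA
      _ = s * (c * (x n - μ)) := by ring
  have hsn : s ≤ c * (x n - μ) := le_of_mul_le_mul_left hstepn hspos
  have hstep1 : s * s ≤ s * (c * (μ - x 1)) := by
    have hA : (μ - x 1) * (x n - μ) ≤ (μ - x 1) * (c * s) :=
      mul_le_mul_of_nonneg_left habsn (by linarith)
    calc s * s = s ^ 2 := by ring
      _ ≤ (μ - x 1) * (x n - μ) := hkey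
      _ ≤ (μ - x 1) * (c * s) := hA
      _ = s * (c * (μ - x 1)) := by ring
  have hs1 : s ≤ c * (μ - x 1) := le_of_mul_le_mul_left hstep1 hspos
  refine ⟨⟨?_, ?_⟩, ?_, ?_⟩
  · rw [div_le_div_iff₀ hcpos hspos]
    linarith [hsn, mul_comm c (x n - μ)]
  · rw [div_le_iff₀ hspos]
    linarith
  · rw [neg_le, ← neg_div, div_le_iff₀ hspos]
    linarith
  · rw [le_neg, ← neg_div, div_le_div_iff₀ hcpos hspos]
    linarith [hs1, mul_comm c (μ - x 1)]
end

section
/- Let z_1 ≤ ... ≤ z_n be reals with ∑z_i = 0 and ∑z_i² = n, where n = 2k, k ≥ 2. If z_k ≤ z_{k+1} < 0, then -(z_k + z_{k+1})/2 ≤ sqrt((k-1)/(k+1)). -/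
open Finset

set_option maxHeartbeats 1000000 in
theorem stmt_19 (k n : ℕ) (hk : 2 ≤ k) (hn : n = 2 * k) (z : ℕ → ℝ)
    (hmono : ∀ i j, 1 ≤ i → i ≤ j → j ≤ n → z i ≤ z j)
    (hsum : ∑ i ∈ Icc 1 n, z i = 0)
    (hsq : ∑ i ∈ Icc 1 n, z i ^ 2 = n)
    (hle : z k ≤ z (k + 1)) (hneg : z (k + 1) < 0) :
    -((z k + z (k + 1)) / 2) ≤ Real.sqrt (((k : ℝ) - 1) / (k + 1)) := by
  set a : ℝ := -z k with ha
  set b : ℝ := -z (k + 1) with hb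
  have hb0 : 0 < b := by simp [hb]; linarith
  have hab : b ≤ a := by simp [ha, hb]; linarith
  have ha0 : 0 < a := lt_of_lt_of_le hb0 hab
  have hkk : (2 : ℝ) ≤ (k : ℝ) := by exact_mod_cast hk
  have hkn : k + 1 ≤ n := by omega
  -- split sums
  have hsplit : ∀ f : ℕ → ℝ, ∑ i ∈ Icc 1 n, f i
      = (∑ i ∈ Icc 1 k, f i) + f (k + 1) + ∑ i ∈ Icc (k + 2) n, f i := by
    intro f
    rw [show (1 : ℕ) = 0 + 1 from rfl, Finset.Icc_add_one_left_eq_Ioc, Finset.Icc_add_one_left_eq_Ioc,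
      show k + 2 = (k + 1) + 1 from rfl, Finset.Icc_add_one_left_eq_Ioc]
    rw [← Finset.sum_Ioc_consecutive f (by omega : 0 ≤ k) (by omega : k ≤ n),
      ← Finset.sum_Ioc_consecutive f (by omega : k ≤ k + 1) hkn,
      Nat.Ioc_succ_singleton, Finset.sum_singleton]
    ring
  -- bounds on the first k terms
  have hzk : ∀ i ∈ Icc 1 k, z i ≤ -a := by
    intro i hi
    simp only [mem_Icc] at hi
    have := hmono i k hi.1 hi.2 (by omega)
    simpa [ha] using this
  have hsum1 : ∑ i ∈ Icc 1 k, z i ≤ (k : ℝ) * (-a) := by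
    have := Finset.sum_le_card_nsmul (Icc 1 k) z (-a) hzk
    simpa [Nat.card_Icc, nsmul_eq_mul] using this
  have hsq1 : (k : ℝ) * a ^ 2 ≤ ∑ i ∈ Icc 1 k, z i ^ 2 := by
    have := Finset.card_nsmul_le_sum (Icc 1 k) (fun i => z i ^ 2) (a ^ 2)
      (fun i hi => by
        have h1 := hzk i hi
        show a ^ 2 ≤ z i ^ 2
        nlinarith [mul_nonneg (by linarith : (0:ℝ) ≤ a - z i) (by linarith : (0:ℝ) ≤ -a - z i)])
    simpa [Nat.card_Icc, nsmul_eq_mul] using this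
  -- tail sum bound
  set S : ℝ := ∑ i ∈ Icc (k + 2) n, z i with hS
  set T : ℝ := ∑ i ∈ Icc (k + 2) n, z i ^ 2 with hT
  have hSlb : (k : ℝ) * a + b ≤ S := by
    have := hsplit z
    rw [hsum] at this
    have hzb : z (k + 1) = -b := by simp [hb]
    linarith [hsum1]
  have hS0 : 0 < S := lt_of_lt_of_le (by positivity) hSlb
  -- Cauchy–Schwarz on the tail
  have hcard : (Icc (k + 2) n).card = k - 1 := by rw [Nat.card_Icc]; omega
  have hCS : S ^ 2 ≤ ((k : ℝ) - 1) * T := by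
    have := sq_sum_le_card_mul_sum_sq (s := Icc (k + 2) n) (f := z)
    rw [hcard] at this
    have hc : ((k - 1 : ℕ) : ℝ) = (k : ℝ) - 1 := by
      have : (1 : ℕ) ≤ k := by omega
      push_cast [Nat.cast_sub this]
      ring
    rw [hc] at this
    exact this
  have hkey : ((k : ℝ) * a + b) ^ 2 ≤ ((k : ℝ) - 1) * T := by
    have h2 : ((k : ℝ) * a + b) ^ 2 ≤ S ^ 2 := by
      have h0 : (0:ℝ) ≤ (k : ℝ) * a + b := by positivity
      nlinarith [mul_le_mul hSlb hSlb h0 hS0.le]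
    linarith [hCS]
  have hTub : T ≤ 2 * (k : ℝ) - (k : ℝ) * a ^ 2 - b ^ 2 := by
    have := hsplit (fun i => z i ^ 2)
    rw [hsq] at this
    have hn' : (n : ℝ) = 2 * (k : ℝ) := by exact_mod_cast congrArg (Nat.cast : ℕ → ℝ) hn
    have hzb : z (k + 1) ^ 2 = b ^ 2 := by simp [hb]
    linarith [hsq1]
  -- final algebra
  have hfin : ((a + b) / 2) ^ 2 ≤ ((k : ℝ) - 1) / ((k : ℝ) + 1) := by
    have hE : 2*(k:ℝ)*(k:ℝ)*a^2 - (k:ℝ)*a^2 + 2*(k:ℝ)*a*b + (k:ℝ)*b^2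
        ≤ 2*(k:ℝ)*(k:ℝ) - 2*(k:ℝ) := by
      have hmul := mul_le_mul_of_nonneg_left hTub (by linarith : (0:ℝ) ≤ (k:ℝ) - 1)
      nlinarith [hkey]
    have hhint : (0:ℝ) ≤ (k:ℝ) * ((k:ℝ) - 1) * (3*a + b) * (a - b) :=
      mul_nonneg (mul_nonneg (mul_nonneg (by linarith) (by linarith)) (by linarith))
        (by linarith)
    have hk2 : (k:ℝ) * (((k:ℝ)+1) * (a+b)^2) ≤ (k:ℝ) * (4 * ((k:ℝ)-1)) := by
      nlinarith [hE, hhint]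
    have h3 := le_of_mul_le_mul_left hk2 (by linarith : (0:ℝ) < (k:ℝ))
    rw [div_pow, div_le_div_iff₀ (by norm_num) (by linarith : (0:ℝ) < (k:ℝ)+1)]
    nlinarith [h3]
  have hgoal : -((z k + z (k + 1)) / 2) = (a + b) / 2 := by simp [ha, hb]; ring
  rw [hgoal]
  exact Real.le_sqrt_of_sq_le hfin
end
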